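/- Assume that ⋂_{m∈ℕ} Φ^m(A) = {0} and let w ≥ 2 be an integer. Call the digit set D w-weak-subadditive if for all nonzero c, d ∈ D and all m, n ∈ ℕ with |m − n| ≠ w − 1 the element Φ^m(c) + Φ^n(d) is the value of some w-NAF-expansion of weight at most 2. If D is w-weak-subadditive, then every z ∈ A that is the value of some multi-expansion is the value of a (w−1)-NAF-expansion whose weight is at most the weight of every multi-expansion with value z. -/

import Mathlib

/-- A multi-expansion over the digit set `D`: a finite multiset of pairs `(d, n)`
with `d ∈ D` nonzero. -/
def IsMultiExpansion {A : Type*} [AddCommGroup A] (D : Finset A)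
    (μ : Multiset (A × ℕ)) : Prop :=
  ∀ x ∈ μ, x.1 ∈ D ∧ x.1 ≠ 0

/-- The value of a multi-expansion: `∑ Φ^n(d)`. -/
def mvalue {A : Type*} [AddCommGroup A] (Φ : AddMonoid.End A)
    (μ : Multiset (A × ℕ)) : A :=
  (μ.map fun x => (Φ ^ x.2) x.1).sum

/-- An expansion: a finitely supported sequence of digits. -/
def IsExpansion {A : Type*} [AddCommGroup A] (D : Finset A) (η : ℕ →₀ A) : Prop :=
  ∀ n, η n ∈ D

/-- The `w`-NAF condition: any two distinct nonzero digits have indices at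
distance at least `w`. -/
def IsWNAF {A : Type*} [AddCommGroup A] (w : ℕ) (η : ℕ →₀ A) : Prop :=
  ∀ m n : ℕ, m ≠ n → η m ≠ 0 → η n ≠ 0 → (w : ℤ) ≤ |(m : ℤ) - (n : ℤ)|

/-- The value of an expansion: `∑ Φ^n(η_n)`. -/
def evalue {A : Type*} [AddCommGroup A] (Φ : AddMonoid.End A) (η : ℕ →₀ A) : A :=
  η.sum fun n d => (Φ ^ n) d

/-- The weight of an expansion: the number of nonzero digits. -/
def eweight {A : Type*} [AddCommGroup A] (η : ℕ →₀ A) : ℕ :=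
  η.support.card

/-- The digit set `D` is `w`-weak-subadditive: the sum of the values of two
singletons `(c, m)` and `(d, n)` with `|m - n| ≠ w - 1` has a `w`-NAF-expansion
of weight at most `2`. -/
def WWeakSubadditive {A : Type*} [AddCommGroup A] (Φ : AddMonoid.End A)
    (D : Finset A) (w : ℕ) : Prop :=
  ∀ c ∈ D, ∀ d ∈ D, c ≠ 0 → d ≠ 0 → ∀ m n : ℕ,
    ((m : ℤ) - (n : ℤ)).natAbs ≠ w - 1 →
    ∃ η : ℕ →₀ A, IsExpansion D η ∧ IsWNAF w η ∧
      evalue Φ η = (Φ ^ m) c + (Φ ^ n) d ∧ eweight η ≤ 2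

section HKAux
open scoped Classical

variable {A : Type*} [AddCommGroup A]

private lemma hk_pow_add (Φ : AddMonoid.End A) (a b : ℕ) (x : A) :
    (Φ ^ (a + b)) x = (Φ ^ a) ((Φ ^ b) x) := by
  rw [pow_add]; rfl

private lemma hk_mvalue_cons (Φ : AddMonoid.End A) (p : A × ℕ) (s : Multiset (A × ℕ)) :
    mvalue Φ (p ::ₘ s) = (Φ ^ p.2) p.1 + mvalue Φ s := by
  simp [mvalue]

private lemma hk_mvalue_add (Φ : AddMonoid.End A) (s t : Multiset (A × ℕ)) :
    mvalue Φ (s + t) = mvalue Φ s + mvalue Φ t := by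
  simp [mvalue]

private lemma hk_mvalue_mem_range (Φ : AddMonoid.End A) (s : Multiset (A × ℕ)) (n₀ : ℕ)
    (h : ∀ x ∈ s, n₀ ≤ x.2) : mvalue Φ s ∈ Set.range (Φ ^ n₀ : AddMonoid.End A) := by
  induction s using Multiset.induction_on with
  | empty => exact ⟨0, by simp [mvalue]⟩
  | cons p s ih =>
    obtain ⟨b, hb⟩ := ih (fun x hx => h x (Multiset.mem_cons_of_mem hx))
    obtain ⟨t, ht⟩ : ∃ t, p.2 = n₀ + t :=
      ⟨p.2 - n₀, by have := h p (Multiset.mem_cons_self p s); omega⟩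
    refine ⟨(Φ ^ t) p.1 + b, ?_⟩
    rw [map_add, hb, hk_mvalue_cons, ht, hk_pow_add]

noncomputable def hkFd (Φ : AddMonoid.End A) (y : A) : ℕ :=
  if h : ∃ k, y ∉ Set.range (Φ ^ k : AddMonoid.End A) then Nat.find h else 0

private lemma hk_lt_Fd (Φ : AddMonoid.End A)
    (hInt : (⋂ m : ℕ, Set.range (Φ ^ m : AddMonoid.End A)) = {0})
    {y : A} (hy : y ≠ 0) {n : ℕ} (hn : y ∈ Set.range (Φ ^ n : AddMonoid.End A)) :
    n < hkFd Φ y := by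
  have hex : ∃ k, y ∉ Set.range (Φ ^ k : AddMonoid.End A) := by
    by_contra hc
    push_neg at hc
    have : y ∈ ⋂ m : ℕ, Set.range (Φ ^ m : AddMonoid.End A) := Set.mem_iInter.2 hc
    rw [hInt] at this
    exact hy this
  rw [hkFd, dif_pos hex]
  by_contra hle
  push_neg at hle
  have hspec := Nat.find_spec hex
  obtain ⟨t, ht⟩ := Nat.exists_eq_add_of_le hle
  obtain ⟨u, hu⟩ := hn
  exact hspec ⟨(Φ ^ t) u, by rw [← hk_pow_add, ← ht, hu]⟩

noncomputable def hkBnd (Φ : AddMonoid.End A) (D : Finset A) : ℕ → A → ℕ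
  | 0, _ => 0
  | k + 1, y =>
      max (hkFd Φ y)
        ((D ×ˢ Finset.range (hkFd Φ y)).sup fun q => hkBnd Φ D k (y - (Φ ^ q.2) q.1))

private lemma hkBnd_succ (Φ : AddMonoid.End A) (D : Finset A) (k : ℕ) (y : A) :
    hkBnd Φ D (k + 1) y =
      max (hkFd Φ y)
        ((D ×ˢ Finset.range (hkFd Φ y)).sup fun q => hkBnd Φ D k (y - (Φ ^ q.2) q.1)) := rfl


private lemma hk_bound (Φ : AddMonoid.End A) (D : Finset A)
    (hInt : (⋂ m : ℕ, Set.range (Φ ^ m : AddMonoid.End A)) = {0}) :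
    ∀ (k : ℕ) (s : Multiset (A × ℕ)), IsMultiExpansion D s →
      (∀ ρ, IsMultiExpansion D ρ → mvalue Φ ρ = mvalue Φ s →
        Multiset.card s ≤ Multiset.card ρ) →
      Multiset.card s = k → ∀ x ∈ s, x.2 ≤ hkBnd Φ D k (mvalue Φ s) := by
  intro k
  induction k with
  | zero =>
    intro s _ _ hcard x hx
    rw [Multiset.card_eq_zero.mp hcard] at hx
    simp at hx
  | succ k ih =>
    intro s hME hmin hcard x hx
    have hs0 : s ≠ 0 := by intro h; rw [h] at hcard; simp at hcard
    have hPne : (s.map Prod.snd).toFinset.Nonempty := by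
      rw [Multiset.toFinset_nonempty]
      intro h
      exact hs0 (Multiset.map_eq_zero.mp h)
    set n₀ := (s.map Prod.snd).toFinset.min' hPne with hn₀
    have hn₀mem : n₀ ∈ (s.map Prod.snd).toFinset := Finset.min'_mem _ _
    rw [Multiset.mem_toFinset, Multiset.mem_map] at hn₀mem
    obtain ⟨x₀, hx₀s, hx₀2⟩ := hn₀mem
    have hlow : ∀ p ∈ s, n₀ ≤ p.2 := by
      intro p hp
      exact Finset.min'_le _ _ (Multiset.mem_toFinset.2 (Multiset.mem_map_of_mem _ hp))
    have hyne : mvalue Φ s ≠ 0 := by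
      intro h0
      have hmz : mvalue Φ (0 : Multiset (A × ℕ)) = 0 := by simp [mvalue]
      have h1 := hmin 0 (by intro q hq; simp at hq) (hmz.trans h0.symm)
      rw [hcard] at h1
      simp at h1
    have hn₀lt : n₀ < hkFd Φ (mvalue Φ s) :=
      hk_lt_Fd Φ hInt hyne (hk_mvalue_mem_range Φ s n₀ hlow)
    set s' := s.erase x₀ with hs'
    have hcons : x₀ ::ₘ s' = s := Multiset.cons_erase hx₀s
    have hME' : IsMultiExpansion D s' := fun p hp => hME p (Multiset.mem_of_mem_erase hp)
    have hmv : mvalue Φ s = (Φ ^ n₀) x₀.1 + mvalue Φ s' := by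
      conv_lhs => rw [← hcons]
      rw [hk_mvalue_cons, hx₀2]
    have hcs : Multiset.card s = Multiset.card s' + 1 := by
      rw [← hcons]; simp
    have hmin' : ∀ ρ, IsMultiExpansion D ρ → mvalue Φ ρ = mvalue Φ s' →
        Multiset.card s' ≤ Multiset.card ρ := by
      intro ρ hρ hρv
      have hρ' : IsMultiExpansion D (x₀ ::ₘ ρ) := by
        intro p hp
        rcases Multiset.mem_cons.mp hp with h | h
        · rw [h]; exact hME x₀ hx₀s
        · exact hρ p h
      have hv' : mvalue Φ (x₀ ::ₘ ρ) = mvalue Φ s := by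
        rw [hk_mvalue_cons, hρv, hx₀2, ← hmv]
      have h2 := hmin _ hρ' hv'
      rw [Multiset.card_cons] at h2
      omega
    have hIH := ih s' hME' hmin' (by omega)
    have hsub : mvalue Φ s' = mvalue Φ s - (Φ ^ n₀) x₀.1 := by
      rw [hmv]; abel
    rcases Multiset.mem_cons.mp (by rw [hcons]; exact hx) with h | h
    · rw [hkBnd_succ]
      refine le_trans ?_ (le_max_left _ _)
      rw [h, hx₀2]
      omega
    · rw [hkBnd_succ]
      refine le_trans (hIH x h) (le_trans ?_ (le_max_right _ _))
      have hq : (x₀.1, n₀) ∈ D ×ˢ Finset.range (hkFd Φ (mvalue Φ s)) :=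
        Finset.mem_product.mpr ⟨(hME x₀ hx₀s).1, Finset.mem_range.mpr hn₀lt⟩
      rw [hsub]
      exact Finset.le_sup (f := fun q => hkBnd Φ D k (mvalue Φ s - (Φ ^ q.2) q.1)) hq

private lemma hk_sum_le (s : Multiset ℕ) (B : ℕ) (h : ∀ x ∈ s, x ≤ B) :
    s.sum ≤ Multiset.card s * B := by
  induction s using Multiset.induction_on with
  | empty => simp
  | cons a s ih =>
    rw [Multiset.sum_cons, Multiset.card_cons]
    have h1 := h a (Multiset.mem_cons_self a s)
    have h2 := ih (fun x hx => h x (Multiset.mem_cons_of_mem hx))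
    nlinarith

private lemma hk_mem_erase_swap {α : Type*} [DecidableEq α] {s : Multiset α} {x y : α}
    (hx : x ∈ s) (hy : y ∈ s.erase x) : x ∈ s.erase y := by
  rcases eq_or_ne x y with rfl | hne
  · exact hy
  · exact (Multiset.mem_erase_of_ne hne).mpr hx

private lemma hk_evalue_add (Φ : AddMonoid.End A) (f g : ℕ →₀ A) :
    evalue Φ (f + g) = evalue Φ f + evalue Φ g := by
  unfold evalue
  exact Finsupp.sum_add_index' (fun a => map_zero _) (fun a b c => map_add _ _ _)

private lemma hk_evalue_single (Φ : AddMonoid.End A) (n : ℕ) (d : A) :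
    evalue Φ (Finsupp.single n d) = (Φ ^ n) d := by
  unfold evalue
  exact Finsupp.sum_single_index (map_zero _)

private lemma hk_evalue_msum (Φ : AddMonoid.End A) (s : Multiset (A × ℕ)) :
    evalue Φ ((s.map fun p => Finsupp.single p.2 p.1).sum) = mvalue Φ s := by
  induction s using Multiset.induction_on with
  | empty => simp [evalue, mvalue]
  | cons p s ih =>
    rw [Multiset.map_cons, Multiset.sum_cons, hk_evalue_add, hk_evalue_single,
      hk_mvalue_cons, ih]

private lemma hk_apply_msum (s : Multiset (A × ℕ)) (k : ℕ) :
    ((s.map fun p => Finsupp.single p.2 p.1).sum) k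
      = ((s.filter fun p => p.2 = k).map Prod.fst).sum := by
  induction s using Multiset.induction_on with
  | empty => simp
  | cons p s ih =>
    rw [Multiset.map_cons, Multiset.sum_cons, Finsupp.add_apply, ih]
    by_cases hp : p.2 = k
    · rw [Multiset.filter_cons, if_pos hp, Multiset.singleton_add, Multiset.map_cons,
        Multiset.sum_cons, hp, Finsupp.single_eq_same]
    · rw [Multiset.filter_cons, if_neg hp, zero_add, Finsupp.single_eq_of_ne' hp, zero_add]

private lemma hk_support_card (s : Multiset (A × ℕ)) :
    ((s.map fun p => Finsupp.single p.2 p.1).sum).support.card ≤ Multiset.card s := by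
  induction s using Multiset.induction_on with
  | empty => simp
  | cons p s ih =>
    rw [Multiset.map_cons, Multiset.sum_cons, Multiset.card_cons]
    refine le_trans (Finset.card_le_card Finsupp.support_add) ?_
    refine le_trans (Finset.card_union_le _ _) ?_
    have h1 : (Finsupp.single p.2 p.1).support.card ≤ 1 := by
      refine le_trans (Finset.card_le_card Finsupp.support_single_subset) ?_
      simp
    omega

def hkShiftEmb (m : ℕ) : ℕ ↪ ℕ := ⟨fun k => k + m, fun a b h => Nat.add_right_cancel h⟩

private lemma hk_evalue_shift (Φ : AddMonoid.End A) (m : ℕ) (f : ℕ →₀ A) :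
    evalue Φ (Finsupp.embDomain (hkShiftEmb m) f) = (Φ ^ m) (evalue Φ f) := by
  unfold evalue
  rw [Finsupp.sum_embDomain, map_finsuppSum]
  refine Finsupp.sum_congr ?_
  intro k _
  show (Φ ^ (k + m)) (f k) = (Φ ^ m) ((Φ ^ k) (f k))
  rw [Nat.add_comm, hk_pow_add]

end HKAux

/-- If the digit set is `w`-weak-subadditive, then every element with a
multi-expansion has an optimal `(w-1)`-NAF-expansion. -/
theorem weak_subadditive_optimal {A : Type*} [AddCommGroup A]
    (Φ : AddMonoid.End A) (D : Finset A) (h0 : (0 : A) ∈ D)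
    (hD : ∀ d ∈ D, d ≠ 0 → d ∉ Set.range Φ)
    (hInt : (⋂ m : ℕ, Set.range (Φ ^ m : AddMonoid.End A)) = {0})
    (w : ℕ) (hw : 2 ≤ w)
    (hweak : WWeakSubadditive Φ D w) :
    ∀ z : A, (∃ μ : Multiset (A × ℕ), IsMultiExpansion D μ ∧ mvalue Φ μ = z) →
      ∃ η : ℕ →₀ A, IsExpansion D η ∧ IsWNAF (w - 1) η ∧ evalue Φ η = z ∧
        ∀ μ : Multiset (A × ℕ), IsMultiExpansion D μ → mvalue Φ μ = z →
          eweight η ≤ Multiset.card μ := by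
  classical
  intro z hz
  obtain ⟨μ₀, hμ₀, hv₀⟩ := hz
  set Wset : Set ℕ :=
    {c | ∃ μ, IsMultiExpansion D μ ∧ mvalue Φ μ = z ∧ Multiset.card μ = c} with hWsetdef
  have hWne : Wset.Nonempty := ⟨_, μ₀, hμ₀, hv₀, rfl⟩
  set W := sInf Wset with hWdef
  obtain ⟨μ₁, hμ₁, hv₁, hc₁⟩ := Nat.sInf_mem hWne
  have hWle : ∀ μ, IsMultiExpansion D μ → mvalue Φ μ = z → W ≤ Multiset.card μ :=
    fun μ h1 h2 => Nat.sInf_le ⟨μ, h1, h2, rfl⟩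
  have hBall : ∀ ν, IsMultiExpansion D ν → mvalue Φ ν = z → Multiset.card ν = W →
      ∀ x ∈ ν, x.2 ≤ hkBnd Φ D W z := by
    intro ν h1 h2 h3
    have := hk_bound Φ D hInt W ν h1
      (fun ρ hρ hρv => by rw [h3]; exact hWle ρ hρ (by rw [hρv, h2])) h3
    rwa [h2] at this
  set K : Set ℕ :=
    {t | ∃ ν, IsMultiExpansion D ν ∧ mvalue Φ ν = z ∧ Multiset.card ν = W ∧
      (ν.map Prod.snd).sum = t} with hKdef
  have hKne : K.Nonempty := ⟨_, μ₁, hμ₁, hv₁, hc₁, rfl⟩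
  have hKbdd : BddAbove K := by
    refine ⟨W * hkBnd Φ D W z, ?_⟩
    rintro t ⟨ν, h1, h2, h3, rfl⟩
    have hle := hk_sum_le (ν.map Prod.snd) (hkBnd Φ D W z) ?_
    · rw [Multiset.card_map, h3] at hle
      exact hle
    · intro u hu
      obtain ⟨p, hp, rfl⟩ := Multiset.mem_map.mp hu
      exact hBall ν h1 h2 h3 p hp
  obtain ⟨μd, hμD, hμv, hμc, hμs⟩ := Nat.sSup_mem hKne hKbdd
  have hNmax : ∀ ν, IsMultiExpansion D ν → mvalue Φ ν = z → Multiset.card ν = W →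
      (ν.map Prod.snd).sum ≤ sSup K :=
    fun ν h1 h2 h3 => le_csSup hKbdd ⟨ν, h1, h2, h3, rfl⟩
  by_cases hgood : ∀ x ∈ μd, ∀ y ∈ μd.erase x, (w : ℤ) - 1 ≤ |(x.2 : ℤ) - (y.2 : ℤ)|
  · -- μd is already (w-1)-NAF shaped; convert to an expansion
    set η : ℕ →₀ A := (μd.map fun p => Finsupp.single p.2 p.1).sum with hηdef
    have hval : ∀ k, η k = ((μd.filter fun p => p.2 = k).map Prod.fst).sum :=
      fun k => hk_apply_msum μd k
    have hcard1 : ∀ k : ℕ, Multiset.card (μd.filter fun p => p.2 = k) ≤ 1 := by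
      intro k
      by_contra hc
      push_neg at hc
      have hne0 : (μd.filter fun p => p.2 = k) ≠ 0 := by
        intro h; rw [h] at hc; simp at hc
      obtain ⟨a, ha⟩ := Multiset.exists_mem_of_ne_zero hne0
      have hce : Multiset.card ((μd.filter fun p => p.2 = k).erase a)
          = Multiset.card (μd.filter fun p => p.2 = k) - 1 :=
        Multiset.card_erase_of_mem ha
      have hbne : ((μd.filter fun p => p.2 = k).erase a) ≠ 0 := by
        intro h; rw [h] at hce; simp at hce; omega
      obtain ⟨b, hb⟩ := Multiset.exists_mem_of_ne_zero hbne
      have haμ : a ∈ μd := Multiset.mem_of_mem_filter ha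
      have hbμ : b ∈ μd.erase a :=
        Multiset.mem_of_le (Multiset.erase_le_erase a (Multiset.filter_le _ _)) hb
      have ha2 : a.2 = k := (Multiset.mem_filter.mp ha).2
      have hb2 : b.2 = k :=
        (Multiset.mem_filter.mp (Multiset.mem_of_le (Multiset.erase_le _ _) hb)).2
      have hgd := hgood a haμ b hbμ
      rw [ha2, hb2, sub_self, abs_zero] at hgd
      omega
    have hexp : IsExpansion D η := by
      intro k
      rw [hval k]
      rcases Nat.le_one_iff_eq_zero_or_eq_one.mp (hcard1 k) with h' | h'
      · rw [Multiset.card_eq_zero.mp h']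
        simpa using h0
      · obtain ⟨a, ha⟩ := Multiset.card_eq_one.mp h'
        rw [ha, Multiset.map_singleton, Multiset.sum_singleton]
        exact (hμD a (Multiset.mem_of_mem_filter (ha ▸ Multiset.mem_singleton_self a))).1
    have hnaf : IsWNAF (w - 1) η := by
      intro a b hab ha hb
      have hfa : ∃ p ∈ μd, p.2 = a := by
        by_contra hc
        push_neg at hc
        apply ha
        rw [hval a, Multiset.filter_eq_nil.mpr (fun p hp h => hc p hp h),
          Multiset.map_zero, Multiset.sum_zero]
      have hfb : ∃ p ∈ μd, p.2 = b := by
        by_contra hc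
        push_neg at hc
        apply hb
        rw [hval b, Multiset.filter_eq_nil.mpr (fun p hp h => hc p hp h),
          Multiset.map_zero, Multiset.sum_zero]
      obtain ⟨pa, hpa, hpa2⟩ := hfa
      obtain ⟨pb, hpb, hpb2⟩ := hfb
      have hne : pb ≠ pa := by
        intro h
        exact hab (by rw [← hpa2, ← hpb2, h])
      have hpbe : pb ∈ μd.erase pa := (Multiset.mem_erase_of_ne hne).mpr hpb
      have hgd := hgood pa hpa pb hpbe
      rw [hpa2, hpb2] at hgd
      have hcast : ((w - 1 : ℕ) : ℤ) = (w : ℤ) - 1 := by omega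
      rw [hcast]
      exact hgd
    have hvz : evalue Φ η = z := by rw [hηdef, hk_evalue_msum, hμv]
    have hwt : eweight η ≤ W := le_trans (hk_support_card μd) (le_of_eq hμc)
    exact ⟨η, hexp, hnaf, hvz, fun μ h1 h2 => le_trans hwt (hWle μ h1 h2)⟩
  · exfalso
    push_neg at hgood
    obtain ⟨x', hx', y', hy', hlt'⟩ := hgood
    obtain ⟨x, hx, y, hy, hmn, hclose⟩ :
        ∃ x, x ∈ μd ∧ ∃ y, y ∈ μd.erase x ∧ x.2 ≤ y.2 ∧ y.2 - x.2 < w - 1 := by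
      rcases le_total x'.2 y'.2 with h | h
      · refine ⟨x', hx', y', hy', h, ?_⟩
        have h1 : ((y'.2 : ℤ) - x'.2) ≤ |(x'.2 : ℤ) - y'.2| := by
          rw [abs_sub_comm]; exact le_abs_self _
        have h2 : ((y'.2 : ℤ) - x'.2) < (w : ℤ) - 1 := lt_of_le_of_lt h1 hlt'
        omega
      · refine ⟨y', Multiset.mem_of_mem_erase hy', x', hk_mem_erase_swap hx' hy', h, ?_⟩
        have h1 : ((x'.2 : ℤ) - y'.2) ≤ |(x'.2 : ℤ) - y'.2| := le_abs_self _
        have h2 : ((x'.2 : ℤ) - y'.2) < (w : ℤ) - 1 := lt_of_le_of_lt h1 hlt'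
        omega
    have hxD := hμD x hx
    have hyD := hμD y (Multiset.mem_of_mem_erase hy)
    have hcond : (((0 : ℕ) : ℤ) - ((y.2 - x.2 : ℕ) : ℤ)).natAbs ≠ w - 1 := by
      have heq : (((0 : ℕ) : ℤ) - ((y.2 - x.2 : ℕ) : ℤ)).natAbs = y.2 - x.2 := by
        rw [Nat.cast_zero, zero_sub, Int.natAbs_neg, Int.natAbs_natCast]
      omega
    obtain ⟨η₀, hη₀D, hη₀naf, hη₀v, hη₀w⟩ :=
      hweak x.1 hxD.1 y.1 hyD.1 hxD.2 hyD.2 0 (y.2 - x.2) hcond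
    set η₁ := Finsupp.embDomain (hkShiftEmb x.2) η₀ with hη₁def
    have hsupp1 : η₁.support = η₀.support.map (hkShiftEmb x.2) :=
      Finsupp.support_embDomain _ _
    set σ := η₁.support.val.map (fun k => (η₁ k, k)) with hσdef
    set rest := (μd.erase x).erase y with hrestdef
    have hsplit : μd = x ::ₘ y ::ₘ rest := by
      rw [hrestdef, Multiset.cons_erase hy, Multiset.cons_erase hx]
    have hν'D : IsMultiExpansion D (rest + σ) := by
      intro p hp
      rcases Multiset.mem_add.mp hp with h | h
      · exact hμD p (Multiset.mem_of_le
          (le_trans (Multiset.erase_le _ _) (Multiset.erase_le _ _)) h)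
      · obtain ⟨k, hk, rfl⟩ := Multiset.mem_map.mp h
        have hks : k ∈ η₁.support := hk
        rw [hsupp1, Finset.mem_map] at hks
        obtain ⟨k₀, hk₀, rfl⟩ := hks
        rw [hη₁def, Finsupp.embDomain_apply_self]
        exact ⟨hη₀D k₀, Finsupp.mem_support_iff.mp hk₀⟩
    have hmσ : mvalue Φ σ = evalue Φ η₁ := by
      rw [hσdef, mvalue, Multiset.map_map]
      rfl
    have h00 : (Φ ^ (0 : ℕ)) x.1 = x.1 := by rw [pow_zero]; rfl
    have hev1 : evalue Φ η₁ = (Φ ^ x.2) x.1 + (Φ ^ y.2) y.1 := by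
      rw [hη₁def, hk_evalue_shift, hη₀v, map_add, h00, ← hk_pow_add,
        Nat.add_sub_cancel' hmn]
    have hmν' : mvalue Φ (rest + σ) = z := by
      rw [hk_mvalue_add, hmσ, hev1, ← hμv, hsplit, hk_mvalue_cons, hk_mvalue_cons]
      abel
    have hcardσ : Multiset.card σ = eweight η₀ := by
      rw [hσdef, Multiset.card_map]
      show η₁.support.val.card = _
      rw [show η₁.support.val.card = η₁.support.card from rfl, hsupp1, Finset.card_map]
      rfl
    have hcardrest : Multiset.card μd = Multiset.card rest + 2 := by
      rw [hsplit]; simp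
    have hW2 : W = Multiset.card rest + 2 := by rw [← hμc, hcardrest]
    have hWν' := hWle _ hν'D hmν'
    rw [Multiset.card_add] at hWν'
    have he2 : eweight η₀ = 2 := by omega
    have he2' : η₀.support.card = 2 := he2
    obtain ⟨P₀, Q₀, hPQne, hsupp0⟩ := Finset.card_eq_two.mp he2'
    have hP₀s : P₀ ∈ η₀.support := by rw [hsupp0]; simp
    have hQ₀s : Q₀ ∈ η₀.support := by rw [hsupp0]; simp
    have hnafPQ := hη₀naf P₀ Q₀ hPQne (Finsupp.mem_support_iff.mp hP₀s)
      (Finsupp.mem_support_iff.mp hQ₀s)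
    have hPQ : (w : ℤ) ≤ (P₀ : ℤ) - Q₀ ∨ (w : ℤ) ≤ (Q₀ : ℤ) - P₀ := by
      rcases le_abs.mp hnafPQ with h | h
      · exact Or.inl h
      · right; omega
    have hσpos : (σ.map Prod.snd).sum = (P₀ + x.2) + (Q₀ + x.2) := by
      have h1 : σ.map Prod.snd = η₁.support.val := by
        rw [hσdef, Multiset.map_map]
        exact Multiset.map_id' _
      rw [h1]
      have h2 : (∑ k ∈ η₁.support, k) = η₁.support.val.sum := by
        show (Multiset.map (fun k => k) η₁.support.val).sum = η₁.support.val.sum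
        rw [Multiset.map_id']
      rw [← h2, hsupp1, Finset.sum_map, hsupp0, Finset.sum_pair hPQne]
      rfl
    have hNsum : x.2 + (y.2 + (rest.map Prod.snd).sum) = sSup K := by
      rw [← hμs, hsplit, Multiset.map_cons, Multiset.sum_cons, Multiset.map_cons,
        Multiset.sum_cons]
    have hcards : Multiset.card (rest + σ) = W := by
      rw [Multiset.card_add, hcardσ, he2]
      omega
    have hfinal := hNmax (rest + σ) hν'D hmν' hcards
    rw [Multiset.map_add, Multiset.sum_add, hσpos] at hfinal
    rcases hPQ with h | h <;> omega
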